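/- Let N ≥ 1, M ≥ 2, d ≥ 2 be integers, ω = exp(2πi/d), Ω = exp(2πi/M), and for a rational ν let X(ν) be the d×d matrix with X(ν)_{n+1,n} = ω^{−ν} (0 ≤ n ≤ d−2), X(ν)_{0,d−1} = ω^{−ν(1−d)}, and all other entries zero, where ω^{x} = exp(2πi x/d). Define the generic Bell operator B = (1/M^N) Σ_{n=1}^{d−1} Σ_{γ=0}^{M−1} ⊗_{j=1}^{N} ( Σ_{η_j=0}^{M−1} Ω^{γ η_j} · exp(2πi n η_j/(M d)) · X(η_j/M)^n ) acting on the N-fold tensor power (ℂ^d)^{⊗N}. Then the N-partite generalized GHZ state ψ = (1/√d) Σ_{k=0}^{d−1} e_k^{⊗N} is an eigenvector of B with eigenvalue d − 1, i.e., B ψ = (d−1) ψ. -/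

import Mathlib

open Matrix

/-- The `d × d` matrix `X(ν)`: the cyclic shift conjugated by the phase shift
`P_ν`, with entries `X(ν)_{n+1,n} = ω^{-ν}` for `0 ≤ n ≤ d-2`,
`X(ν)_{0,d-1} = ω^{-ν(1-d)}`, and zero elsewhere, where
`ω^x = exp(2πi·x/d)`. -/
noncomputable def Xmat (d : ℕ) (ν : ℚ) : Matrix (Fin d) (Fin d) ℂ :=
  Matrix.of fun i j : Fin d =>
    if (i : ℕ) = (j : ℕ) + 1 then
      Complex.exp (2 * Real.pi * Complex.I * (-(ν : ℂ)) / d)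
    else if (i : ℕ) = 0 ∧ (j : ℕ) = d - 1 then
      Complex.exp (2 * Real.pi * Complex.I * (-(ν : ℂ) * (1 - (d : ℂ))) / d)
    else 0

/-- The single-party factor
`Σ_{η=0}^{M-1} Ω^{γη} · exp(2πi n η/(M d)) · X(η/M)^n` of the generic Bell
operator with `M` measurement settings, where `Ω = exp(2πi/M)`. -/
noncomputable def partyFactor (d M γ n : ℕ) : Matrix (Fin d) (Fin d) ℂ :=
  ∑ η ∈ Finset.range M,
    (Complex.exp (2 * Real.pi * Complex.I / M) ^ (γ * η) *
      Complex.exp (2 * Real.pi * Complex.I * n * η / (M * d))) •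
        Xmat d ((η : ℚ) / M) ^ n

/-- The generic Bell operator
`B = (1/M^N) Σ_{n=1}^{d-1} Σ_{γ=0}^{M-1} ⊗_{j=1}^{N} Σ_{η_j=0}^{M-1}
Ω^{γη_j} exp(2πi n η_j/(M d)) X(η_j/M)^n` for the `(N,M,d)` scenario, realized
on the `N`-fold tensor power `(ℂ^d)^{⊗N}` (indexed by `Fin N → Fin d`), the
entry of the `N`-fold tensor product of matrices at `(f, g)` being the product
of the single-party entries at `(f j, g j)`. -/
noncomputable def genericBellOperator (N M d : ℕ) :
    Matrix (Fin N → Fin d) (Fin N → Fin d) ℂ :=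
  (1 / (M : ℂ) ^ N) •
    ∑ n ∈ Finset.Icc 1 (d - 1), ∑ γ ∈ Finset.range M,
      Matrix.of fun f g : Fin N → Fin d =>
        ∏ j : Fin N, partyFactor d M γ n (f j) (g j)

lemma xmat_pow_apply (d : ℕ) (hd : 0 < d) (ν : ℚ) (n : ℕ) (i j : Fin d) :
    (Xmat d ν ^ n) i j =
      if (i : ℕ) = ((j : ℕ) + n) % d then
        Complex.exp (2 * Real.pi * Complex.I * (-(ν:ℂ) * n) / d) *
          Complex.exp (2 * Real.pi * Complex.I * (ν:ℂ)) ^ (((j:ℕ) + n) / d)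
      else 0 := by
  have hdC : (d:ℂ) ≠ 0 := Nat.cast_ne_zero.mpr hd.ne'
  induction n generalizing i j with
  | zero =>
      simp [Matrix.one_apply, Fin.ext_iff, Nat.mod_eq_of_lt j.isLt, Nat.div_eq_of_lt j.isLt]
  | succ n ih =>
      rw [pow_succ, Matrix.mul_apply]
      have hm : ((j:ℕ)+1) % d < d := Nat.mod_lt _ hd
      set m₀ : Fin d := ⟨((j:ℕ)+1) % d, hm⟩ with hm₀
      rw [Finset.sum_eq_single m₀]
      · rcases Nat.lt_or_ge ((j:ℕ)+1) d with hlt | hge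
        · have hv : (m₀ : ℕ) = (j:ℕ)+1 := Nat.mod_eq_of_lt hlt
          have hX : Xmat d ν m₀ j =
              Complex.exp (2 * Real.pi * Complex.I * (-(ν:ℂ)) / d) := by
            simp only [Xmat, Matrix.of_apply]
            rw [if_pos hv]
          rw [hX, ih]
          have harith : (j:ℕ)+1+n = (j:ℕ)+(n+1) := by omega
          rw [hv, harith]
          split_ifs with h
          · have key : Complex.exp (2 * Real.pi * Complex.I * (-(ν:ℂ) * n) / d) *
                Complex.exp (2 * Real.pi * Complex.I * (-(ν:ℂ)) / d) =
                Complex.exp (2 * Real.pi * Complex.I * (-(ν:ℂ) * ((n:ℕ)+1 : ℕ)) / d) := by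
              rw [← Complex.exp_add]; congr 1; push_cast; field_simp; ring
            rw [mul_right_comm, key]
          · rw [zero_mul]
        · have hjd : (j:ℕ)+1 = d := by omega
          have hv : (m₀ : ℕ) = 0 := by simp [hm₀, hjd]
          have hX : Xmat d ν m₀ j =
              Complex.exp (2 * Real.pi * Complex.I * (-(ν:ℂ) * (1 - (d:ℂ))) / d) := by
            simp only [Xmat, Matrix.of_apply]
            rw [if_neg, if_pos]
            · exact ⟨hv, by omega⟩
            · omega
          rw [hX, ih, hv]
          have h1 : (0 + n) % d = ((j:ℕ) + (n+1)) % d := by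
            have : (j:ℕ) + (n+1) = d + n := by omega
            simp [this, Nat.add_mod_left]
          have h2 : ((j:ℕ) + (n+1)) / d = (0+n)/d + 1 := by
            have : (j:ℕ) + (n+1) = n + d := by omega
            rw [this, Nat.add_div_right _ hd]
            simp
          rw [h1, h2]
          split_ifs with h
          · have key : Complex.exp (2 * Real.pi * Complex.I * (-(ν:ℂ) * n) / d) *
                Complex.exp (2 * Real.pi * Complex.I * (-(ν:ℂ) * (1 - (d:ℂ))) / d) =
                Complex.exp (2 * Real.pi * Complex.I * (-(ν:ℂ) * ((n:ℕ)+1 : ℕ)) / d) *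
                  Complex.exp (2 * Real.pi * Complex.I * (ν:ℂ)) := by
              rw [← Complex.exp_add, ← Complex.exp_add]; congr 1; push_cast; field_simp; ring
            rw [mul_right_comm, key, pow_succ]; ring
          · rw [zero_mul]
      · intro b _ hb
        have hXb : Xmat d ν b j = 0 := by
          simp only [Xmat, Matrix.of_apply]
          split_ifs with h1 h2
          · exfalso; apply hb; apply Fin.ext
            have : (j:ℕ)+1 < d := lt_of_le_of_lt (le_of_eq h1.symm) b.isLt
            rw [h1, hm₀]; simp [Nat.mod_eq_of_lt this]
          · exfalso; apply hb; apply Fin.ext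
            have : (j:ℕ)+1 = d := by omega
            rw [hm₀]; simp [this, h2.1]
          · rfl
        rw [hXb, mul_zero]
      · intro h; exact absurd (Finset.mem_univ m₀) h

lemma geom_sum_omega (M t : ℕ) (hM : 2 ≤ M) :
    (∑ η ∈ Finset.range M, Complex.exp (2 * Real.pi * Complex.I / M) ^ (t * η))
      = if M ∣ t then (M:ℂ) else 0 := by
  have hM0 : (M:ℂ) ≠ 0 := Nat.cast_ne_zero.mpr (by omega)
  have hprim : IsPrimitiveRoot (Complex.exp (2 * Real.pi * Complex.I / M)) M := by
    exact Complex.isPrimitiveRoot_exp M (by omega)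
  set Ω := Complex.exp (2 * Real.pi * Complex.I / M) with hΩ
  have hpow : ∀ η, Ω ^ (t * η) = (Ω ^ t) ^ η := fun η => pow_mul Ω t η
  simp only [hpow]
  by_cases hdvd : M ∣ t
  · have h1 : Ω ^ t = 1 := by
      obtain ⟨s, rfl⟩ := hdvd
      rw [pow_mul, hprim.pow_eq_one, one_pow]
    simp [h1, hdvd]
  · have hne : Ω ^ t ≠ 1 := fun h => hdvd ((hprim.pow_eq_one_iff_dvd t).mp h)
    rw [geom_sum_eq hne]
    have : (Ω ^ t) ^ M = 1 := by
      rw [← pow_mul, mul_comm, pow_mul, hprim.pow_eq_one, one_pow]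
    simp [this, hdvd]

lemma partyFactor_apply (d M γ n : ℕ) (hd : 0 < d) (hM : 2 ≤ M) (i j : Fin d) :
    partyFactor d M γ n i j =
      if (i : ℕ) = ((j : ℕ) + n) % d then
        (if M ∣ γ + ((j:ℕ) + n) / d then (M:ℂ) else 0)
      else 0 := by
  have hdC : (d:ℂ) ≠ 0 := Nat.cast_ne_zero.mpr hd.ne'
  have hMC : (M:ℂ) ≠ 0 := Nat.cast_ne_zero.mpr (by omega)
  rw [partyFactor, Matrix.sum_apply]
  simp only [Matrix.smul_apply, xmat_pow_apply d hd _ n i j, smul_eq_mul]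
  by_cases h : (i : ℕ) = ((j : ℕ) + n) % d
  · rw [if_pos h, ← geom_sum_omega M (γ + ((j:ℕ) + n) / d) hM]
    refine Finset.sum_congr rfl fun η _ => ?_
    rw [if_pos h]
    have e1 : Complex.exp (2 * Real.pi * Complex.I * (-(((η:ℚ)/M : ℚ):ℂ) * n) / d)
        = Complex.exp (-(2 * Real.pi * Complex.I * n * η / (M * d))) := by
      congr 1
      push_cast
      field_simp
    have e2 : Complex.exp (2 * Real.pi * Complex.I * (((η:ℚ)/M : ℚ):ℂ))
        = Complex.exp (2 * Real.pi * Complex.I / M) ^ η := by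
      rw [← Complex.exp_nat_mul]
      congr 1
      push_cast
      ring
    rw [e1, e2, ← pow_mul, Complex.exp_neg, mul_assoc,
      mul_inv_cancel_left₀ (Complex.exp_ne_zero _), ← pow_add]
    congr 1
    ring
  · rw [if_neg h]
    refine Finset.sum_eq_zero fun η _ => ?_
    rw [if_neg h, mul_zero]

lemma sum_gamma (M N w : ℕ) (hM : 2 ≤ M) (hN : 1 ≤ N) (hw : w ≤ 1) :
    ∑ γ ∈ Finset.range M, (if M ∣ γ + w then (M:ℂ) else 0) ^ N = (M:ℂ)^N := by
  interval_cases w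
  · rw [Finset.sum_eq_single_of_mem 0 (Finset.mem_range.mpr (by omega))]
    · simp
    · intro γ hγ hne
      rw [if_neg, zero_pow (by omega)]
      intro hdvd
      exact hne (Nat.eq_zero_of_dvd_of_lt (by simpa using hdvd) (Finset.mem_range.mp hγ))
  · rw [Finset.sum_eq_single_of_mem (M-1) (Finset.mem_range.mpr (by omega))]
    · rw [show M - 1 + 1 = M from by omega, if_pos dvd_rfl]
    · intro γ hγ hne
      rw [if_neg, zero_pow (by omega)]
      intro hdvd
      have := Nat.le_of_dvd (by omega) hdvd
      have hγM := Finset.mem_range.mp hγ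
      omega

lemma prod_ite_ghz (N : ℕ) (hN : 1 ≤ N) (P : Fin N → Prop) [DecidablePred P] (a : ℂ) :
    ∏ j : Fin N, (if P j then a else 0) = if ∀ j, P j then a ^ N else 0 := by
  by_cases h : ∀ j, P j
  · rw [if_pos h, Finset.prod_congr rfl (fun j _ => if_pos (h j)), Finset.prod_const,
      Finset.card_univ, Fintype.card_fin]
  · rw [if_neg h]
    push_neg at h
    obtain ⟨j, hj⟩ := h
    exact Finset.prod_eq_zero (Finset.mem_univ j) (if_neg hj)

open Fin.NatCast in
lemma core_sum (N M d : ℕ) (hN : 1 ≤ N) (hM : 2 ≤ M) (hd : 2 ≤ d) (f : Fin N → Fin d) :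
    ∑ n ∈ Finset.Icc 1 (d-1), ∑ γ ∈ Finset.range M, ∑ k : Fin d,
        ∏ j : Fin N, partyFactor d M γ n (f j) k
      = (M:ℂ)^N * (((d:ℂ) - 1) * ∑ k : Fin d, (if f = fun _ => k then (1:ℂ) else 0)) := by
  haveI : NeZero d := ⟨by omega⟩
  have hd0 : 0 < d := by omega
  have step : ∀ n ∈ Finset.Icc 1 (d-1),
      (∑ γ ∈ Finset.range M, ∑ k : Fin d, ∏ j : Fin N, partyFactor d M γ n (f j) k)
      = (M:ℂ)^N * ∑ k : Fin d, (if f = fun _ => k then (1:ℂ) else 0) := by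
    intro n hn
    rw [Finset.mem_Icc] at hn
    have hnd : n < d := by omega
    rw [Finset.sum_comm]
    have inner : ∀ k : Fin d,
        (∑ γ ∈ Finset.range M, ∏ j : Fin N, partyFactor d M γ n (f j) k)
        = if f = (fun _ => k + (n : Fin d)) then (M:ℂ)^N else 0 := by
      intro k
      have hk' : ((k + (n : Fin d) : Fin d) : ℕ) = ((k:ℕ) + n) % d := by
        rw [Fin.add_def]
        simp [Fin.val_natCast, Nat.mod_eq_of_lt hnd]
      have hw : ((k:ℕ)+n)/d ≤ 1 := by
        have h2 : (k:ℕ) + n < 2 * d := by have := k.isLt; omega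
        have := (Nat.div_lt_iff_lt_mul hd0).mpr (by omega : (k:ℕ)+n < 2*d)
        omega
      have hcond : ∀ γ, (∏ j : Fin N, partyFactor d M γ n (f j) k)
          = if (∀ j, f j = k + (n:Fin d)) then
              (if M ∣ γ + ((k:ℕ)+n)/d then (M:ℂ) else 0)^N else 0 := by
        intro γ
        have e : ∀ j : Fin N, partyFactor d M γ n (f j) k
            = if f j = k + (n:Fin d) then (if M ∣ γ + ((k:ℕ)+n)/d then (M:ℂ) else 0) else 0 := by
          intro j
          rw [partyFactor_apply d M γ n hd0 hM]
          refine if_congr ?_ rfl rfl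
          rw [Fin.ext_iff, hk']
        simp only [e]
        exact prod_ite_ghz N hN _ _
      simp only [hcond]
      by_cases hf : ∀ j, f j = k + (n:Fin d)
      · simp only [if_pos hf]
        rw [sum_gamma M N (((k:ℕ)+n)/d) hM hN hw, if_pos (funext hf)]
      · simp only [if_neg hf, if_neg (fun h => hf (fun j => congrFun h j)),
          Finset.sum_const_zero]
    rw [Finset.sum_congr rfl (fun k _ => inner k), Finset.mul_sum]
    exact Fintype.sum_equiv (Equiv.addRight ((n : Fin d))) _ _
      (fun k => by
        by_cases h : f = fun _ => k + (n:Fin d) <;> simp [Equiv.coe_addRight, h])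
  rw [Finset.sum_congr rfl step, Finset.sum_const, Nat.card_Icc]
  have hcard : d - 1 + 1 - 1 = d - 1 := by omega
  rw [hcard, nsmul_eq_mul]
  rw [Nat.cast_sub (by omega : 1 ≤ d)]
  push_cast
  ring

/-- **The `N`-partite GHZ state is an eigenvector of the generic Bell operator
with eigenvalue `d - 1`:** for `ψ = (1/√d) Σ_k e_k^{⊗N}` one has
`B ψ = (d-1) ψ`. -/
theorem ghz_eigenvector_of_generic_bell_operator
    (N M d : ℕ) (hN : 1 ≤ N) (hM : 2 ≤ M) (hd : 2 ≤ d)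
    (ψ : (Fin N → Fin d) → ℂ)
    (hψ : ψ = (1 / (Real.sqrt d : ℂ)) •
      ∑ k : Fin d, (Pi.single (fun _ => k) (1 : ℂ) : (Fin N → Fin d) → ℂ)) :
    genericBellOperator N M d *ᵥ ψ = ((d : ℂ) - 1) • ψ := by
  have hMC : (M:ℂ) ^ N ≠ 0 := pow_ne_zero _ (Nat.cast_ne_zero.mpr (by omega))
  rw [hψ]
  funext f
  simp only [Matrix.mulVec, dotProduct, genericBellOperator, Matrix.smul_apply,
    Matrix.sum_apply, Matrix.of_apply, Pi.smul_apply, Finset.sum_apply, smul_eq_mul,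
    Pi.single_apply]
  have lhs : ∀ g : Fin N → Fin d,
      (1 / (M:ℂ) ^ N * ∑ n ∈ Finset.Icc 1 (d-1), ∑ γ ∈ Finset.range M,
          ∏ j : Fin N, partyFactor d M γ n (f j) (g j)) *
        (1 / (Real.sqrt d : ℂ) * ∑ k : Fin d, (if g = fun _ => k then (1:ℂ) else 0))
      = ∑ k : Fin d, (if g = (fun _ => k) then
          (1 / (M:ℂ) ^ N * (1 / (Real.sqrt d : ℂ)) *
            ∑ n ∈ Finset.Icc 1 (d-1), ∑ γ ∈ Finset.range M,
              ∏ j : Fin N, partyFactor d M γ n (f j) (g j)) else 0) := by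
    intro g
    have e : ∀ k : Fin d, (if g = (fun _ => k) then
          (1 / (M:ℂ) ^ N * (1 / (Real.sqrt d : ℂ)) *
            ∑ n ∈ Finset.Icc 1 (d-1), ∑ γ ∈ Finset.range M,
              ∏ j : Fin N, partyFactor d M γ n (f j) (g j)) else 0)
        = (1 / (M:ℂ) ^ N * (1 / (Real.sqrt d : ℂ)) *
            ∑ n ∈ Finset.Icc 1 (d-1), ∑ γ ∈ Finset.range M,
              ∏ j : Fin N, partyFactor d M γ n (f j) (g j)) *
          (if g = (fun _ => k) then 1 else 0) := by
      intro k
      by_cases h : g = fun _ => k <;> simp [h]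
    rw [Finset.sum_congr rfl (fun k _ => e k), ← Finset.mul_sum]
    ring
  rw [Finset.sum_congr rfl (fun g _ => lhs g), Finset.sum_comm]
  have inner : ∀ k : Fin d,
      (∑ g : Fin N → Fin d, if g = (fun _ => k) then
          (1 / (M:ℂ) ^ N * (1 / (Real.sqrt d : ℂ)) *
            ∑ n ∈ Finset.Icc 1 (d-1), ∑ γ ∈ Finset.range M,
              ∏ j : Fin N, partyFactor d M γ n (f j) (g j)) else 0)
      = 1 / (M:ℂ) ^ N * (1 / (Real.sqrt d : ℂ)) *
          ∑ n ∈ Finset.Icc 1 (d-1), ∑ γ ∈ Finset.range M,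
            ∏ j : Fin N, partyFactor d M γ n (f j) k := by
    intro k
    rw [Finset.sum_ite_eq' Finset.univ (fun _ => k)]
    simp
  rw [Finset.sum_congr rfl (fun k _ => inner k), ← Finset.mul_sum]
  have swap : ∑ k : Fin d, ∑ n ∈ Finset.Icc 1 (d-1), ∑ γ ∈ Finset.range M,
        ∏ j : Fin N, partyFactor d M γ n (f j) k
      = ∑ n ∈ Finset.Icc 1 (d-1), ∑ γ ∈ Finset.range M, ∑ k : Fin d,
        ∏ j : Fin N, partyFactor d M γ n (f j) k := by
    rw [Finset.sum_comm]
    exact Finset.sum_congr rfl fun n _ => Finset.sum_comm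
  rw [swap, core_sum N M d hN hM hd f]
  have hfin : ∀ (x y : ℂ), 1/(M:ℂ)^N * y * ((M:ℂ)^N * x) = x * y := by
    intro x y
    field_simp
  rw [hfin]
  ring
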